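/- Let m ≥ 1, let ℓ be a positive integer and q = 2^ℓ, let b = 2 + ⌈log₂ m⌉, let c be a positive integer with ℓ − c > ⌈log₂ m⌉, and let r = (1 − 2^{−c})q³. For a ∈ ℕ write a = Σ_{i≥0} a_i 2^i with a_i ∈ {0,1}. Define Good to be the set of tuples (i_1,…,i_m,j_1,…,j_m) ∈ ℕ^{2m} with i_k < q² and j_k < q for all k, such that there exists s ∈ [2ℓ−c, 2ℓ−b−1] with (i_k)_{s+t} = (j_k)_{s+t} = 0 for all t ∈ {0,1,…,b} and all k ∈ [m]. Then for every (i_1,…,i_m,j_1,…,j_m) ∈ Good, the monomial function H^m → F_{q²}, (x_1,y_1,…,x_m,y_m) ↦ ∏_{k=1}^m x_k^{i_k} y_k^{j_k}, belongs to lift_{Φ_H}^m(Herm_q[r]). -/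

import Mathlib

/-- The Hermitian curve `H = {(x,y) ∈ F² : x^(q+1) = y + y^q}` (here `F` is the field
with `q²` elements; `x^(q+1)` is the norm and `y + y^q` the trace down to `F_q`). -/
def Hset (F : Type*) [Field F] (q : ℕ) : Set (F × F) :=
  {p | p.1 ^ (q + 1) = p.2 + p.2 ^ q}

/-- The map `σ_{a,b,c} : (x,y) ↦ (a·x + b, a^(q+1)·y + a·b^q·x + c)`. -/
def sigmaMap {F : Type*} [Field F] (q : ℕ) (a b c : F) : F × F → F × F :=
  fun p => (a * p.1 + b, a ^ (q + 1) * p.2 + a * b ^ q * p.1 + c)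

/-- The Hermitian curve as a subtype (the domain of the Hermitian code). -/
abbrev Hsub (F : Type*) [Field F] (q : ℕ) : Type _ :=
  {p : F × F // p.1 ^ (q + 1) = p.2 + p.2 ^ q}

/-- The Hermitian code `Herm_q[r] ⊆ (H → F)`: the `F`-span of the monomial functions
`(x,y) ↦ x^i y^j` with `j < q` and `q·i + (q+1)·j < r`. -/
def HermCode (F : Type*) [Field F] (q r : ℕ) : Submodule F (Hsub F q → F) :=
  Submodule.span F {f : Hsub F q → F |
    ∃ i j : ℕ, j < q ∧ q * i + (q + 1) * j < r ∧
      f = fun p => p.1.1 ^ i * p.1.2 ^ j}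

/-- The maps `σ_{a,b,c}` viewed as maps of the Hermitian curve `H` to itself. -/
def PhiHsub (F : Type*) [Field F] (q : ℕ) : Set (Hsub F q → Hsub F q) :=
  {τ | ∃ a b c : F, a ≠ 0 ∧ (b, c) ∈ Hset F q ∧
    ∀ p : Hsub F q, (τ p : F × F) = sigmaMap q a b c (p : F × F)}

/-- Restriction of `f : Dᵐ → R` along a tuple of maps `D → D`. -/
def restr {D R : Type*} {m : ℕ} (f : (Fin m → D) → R) (σ : Fin m → D → D) : D → R :=
  fun z => f fun i => σ i z

/-- The `m`-dimensional `Φ`-lift of a code `C ⊆ (D → R)`. -/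
def liftCode {D R : Type*} (Φ : Set (D → D)) (m : ℕ) (C : Set (D → R)) :
    Set ((Fin m → D) → R) :=
  {f | ∀ σ : Fin m → D → D, (∀ i, σ i ∈ Φ) → restr f σ ∈ C}



lemma mod_window_lt {e s b : ℕ} (hbits : ∀ t ≤ b, e.testBit (s + t) = false) :
    e % 2 ^ (s + b + 1) < 2 ^ s := by
  set x := e % 2 ^ (s + b + 1) with hxdef
  have hx : x < 2 ^ (s + b + 1) := Nat.mod_lt _ (Nat.two_pow_pos _)
  have h0 : x / 2 ^ s = 0 := by
    rw [← Nat.shiftRight_eq_div_pow]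
    apply Nat.zero_of_testBit_eq_false
    intro t
    rw [Nat.testBit_shiftRight]
    rcases le_or_gt t b with h | h
    · rw [hxdef, Nat.testBit_mod_two_pow]
      simp [hbits t h]
    · exact Nat.testBit_eq_false_of_lt (lt_of_lt_of_le hx (Nat.pow_le_pow_right (by norm_num) (by omega)))
  exact ((Nat.div_eq_zero_iff).mp h0).resolve_left (Nat.two_pow_pos s).ne'

lemma choose_odd_testBit : ∀ t n k : ℕ, n.choose k % 2 = 1 → n.testBit t = false →
    k.testBit t = false := by
  intro t
  induction t with
  | zero =>
    intro n k hodd hn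
    have hl := (Choose.choose_modEq_choose_mod_mul_choose_div_nat (p := 2) (n := n) (k := k))
    unfold Nat.ModEq at hl
    rw [hodd, Nat.mul_mod] at hl
    have hn0 : n % 2 = 0 := by simpa [Nat.testBit_zero] using hn
    have : k % 2 = 0 := by
      by_contra hk
      have hk1 : k % 2 = 1 := by omega
      rw [hn0, hk1] at hl
      simp [Nat.choose] at hl
    simpa [Nat.testBit_zero] using this
  | succ t ih =>
    intro n k hodd hn
    have hl := (Choose.choose_modEq_choose_mod_mul_choose_div_nat (p := 2) (n := n) (k := k))
    unfold Nat.ModEq at hl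
    rw [hodd, Nat.mul_mod] at hl
    have h2 : (n / 2).choose (k / 2) % 2 = 1 := by
      rcases Nat.mod_two_eq_zero_or_one ((n / 2).choose (k / 2)) with h | h
      · rw [h] at hl; simp at hl
      · exact h
    have hn' : (n / 2).testBit t = false := by
      rwa [← Nat.testBit_succ]
    have := ih _ _ h2 hn'
    rwa [Nat.testBit_succ]

lemma char_two_of_card {F : Type*} [Field F] [Fintype F] {ℓ : ℕ} (hl : 0 < ℓ)
    (hcard : Fintype.card F = 2 ^ ℓ) : CharP F 2 := by
  have h := ringChar.charP F
  obtain ⟨n, hp, hcard'⟩ := FiniteField.card F (ringChar F)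
  have hdvd : ringChar F ∣ 2 ^ ℓ := by
    rw [← hcard, hcard']
    exact dvd_pow_self _ (by positivity)
  have : ringChar F = 2 :=
    (Nat.prime_dvd_prime_iff_eq hp Nat.prime_two).mp (hp.dvd_of_dvd_pow hdvd)
  rwa [this] at h

noncomputable def mono (F : Type*) [Field F] (q u v : ℕ) : Hsub F q → F :=
  fun p => p.1.1 ^ u * p.1.2 ^ v

section Mono
variable {F : Type*} [Field F] [Fintype F] {ℓ q : ℕ} (hq : q = 2 ^ ℓ) (hl : 0 < ℓ)
  (hcard : Fintype.card F = q ^ 2)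

include hq hl hcard

lemma char2 : CharP F 2 := by
  apply char_two_of_card (ℓ := 2 * ℓ) (by omega)
  rw [hcard, hq, ← pow_mul, mul_comm]

lemma monoX (u v : ℕ) : mono F q (u + q ^ 2) v = mono F q (u + 1) v := by
  funext p
  show p.1.1 ^ (u + q ^ 2) * _ = p.1.1 ^ (u + 1) * _
  have : p.1.1 ^ (q ^ 2) = p.1.1 := by
    rw [← hcard]; exact FiniteField.pow_card _
  rw [pow_add, this, ← pow_succ]

lemma monoXred (Q : ℕ) : ∀ R v, mono F q (q ^ 2 * Q + R) v = mono F q (Q + R) v := by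
  induction Q with
  | zero => intro R v; simp
  | succ Q ih =>
    intro R v
    have h1 : q ^ 2 * (Q + 1) + R = (q ^ 2 * Q + R) + q ^ 2 := by ring
    rw [h1, monoX hq hl hcard, show q ^ 2 * Q + R + 1 = q ^ 2 * Q + (R + 1) by ring,
      ih (R + 1), show Q + (R + 1) = Q + 1 + R by ring]

lemma monoY (u v : ℕ) :
    mono F q u (v + q) = fun p => mono F q (u + (q + 1)) v p + mono F q u (v + 1) p := by
  haveI := char2 hq hl hcard
  funext p
  show p.1.1 ^ u * p.1.2 ^ (v + q) = _
  have hrel : p.1.2 ^ q = p.1.1 ^ (q + 1) + p.1.2 := by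
    have := p.2
    rw [← CharTwo.sub_eq_add, eq_sub_iff_add_eq, add_comm, this]
  show _ = p.1.1 ^ (u + (q + 1)) * p.1.2 ^ v + p.1.1 ^ u * p.1.2 ^ (v + 1)
  rw [pow_add, pow_add, pow_add, hrel]
  ring
end Mono

lemma red_arith (S B2 K2 G q m t Lo v P : ℕ)
    (hK2 : 0 < K2) (hq2 : 2 ≤ q) (hm : 0 < m) (hmB : m ≤ B2) (hmq'' : m ≤ q)
    (hmq : 2 * m * q ≤ S)
    (hq2eq : q * q = 8 * (S * B2) * K2)
    (hLo : Lo + 2 * m ≤ m * S + m * q) (hP : P < m * K2)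
    (hvt : v + q * t ≤ m * (q - 1)) (hv : v < q)
    (hG1 : G ≤ q * (S * B2)) (hG2 : 2 * (q * q) ≤ G) :
    P / K2 + (Lo + (q + 1) * t + 8 * (S * B2) * (P % K2)) < q * q ∧
    q * (P / K2 + (Lo + (q + 1) * t + 8 * (S * B2) * (P % K2))) + (q + 1) * v + G
      < q * (q * q) := by
  have hmul : m * (q - 1) + m = m * q := by
    obtain ⟨q', rfl⟩ : ∃ q', q = q' + 1 := ⟨q - 1, by omega⟩
    simp [Nat.mul_succ]
  have htm : t < m := by
    by_contra hcon
    push_neg at hcon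
    have h5 : q * m ≤ q * t := Nat.mul_le_mul_left q hcon
    have h6 : m * q = q * m := Nat.mul_comm m q
    linarith
  have hPhi : P / K2 < m := (Nat.div_lt_iff_lt_mul hK2).mpr hP
  have hPlo : P % K2 < K2 := Nat.mod_lt _ hK2
  have hS : 0 < S := by
    rcases Nat.eq_zero_or_pos S with h | h
    · rw [h] at hmq; nlinarith
    · exact h
  have hB2 : 0 < B2 := by omega
  have hSB2 : B2 ≤ S * B2 := Nat.le_mul_of_pos_left B2 hS
  have hSB2' : S ≤ S * B2 := Nat.le_mul_of_pos_right S hB2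
  have hSB2pos : 1 ≤ S * B2 := Nat.one_le_iff_ne_zero.mpr (by positivity)
  have h2 : (q + 1) * (t + 1) ≤ (q + 1) * m := Nat.mul_le_mul_left (q + 1) (by omega)
  have h2' : (q + 1) * (t + 1) = (q + 1) * t + q + 1 := by ring
  have hmS : m * S ≤ B2 * S := Nat.mul_le_mul_right S hmB
  have hLo'' : Lo + (q + 1) * t + 1 ≤ 2 * (S * B2) := by
    have hexp : (q + 1) * m = m * q + m := by ring
    linarith [hLo, hmq, hmS, hSB2']
  have h4 := Nat.mul_le_mul_left (8 * (S * B2)) (show P % K2 + 1 ≤ K2 by omega)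
  have h4' : 8 * (S * B2) * (P % K2 + 1) = 8 * (S * B2) * (P % K2) + 8 * (S * B2) := by ring
  have hR : Lo + (q + 1) * t + 8 * (S * B2) * (P % K2) + 8 * (S * B2)
      ≤ 8 * (S * B2) * K2 + 2 * (S * B2) := by linarith
  have hi : P / K2 + (Lo + (q + 1) * t + 8 * (S * B2) * (P % K2)) + 5 * (S * B2) + 1
      ≤ q * q := by linarith
  refine ⟨by linarith, ?_⟩
  have hqi := Nat.mul_le_mul_left q
    (show P / K2 + (Lo + (q + 1) * t + 8 * (S * B2) * (P % K2)) + 4 * (S * B2) + 1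
      ≤ q * q by linarith)
  have hv2 : (q + 1) * (v + 1) ≤ (q + 1) * q := Nat.mul_le_mul_left (q + 1) (by omega)
  have hv2' : (q + 1) * (v + 1) = (q + 1) * v + q + 1 := by ring
  have hv2'' : (q + 1) * q = q * q + q := by ring
  linarith [hqi, hG1, hG2]

noncomputable def cf {F : Type*} [Field F] (A B C D E : F) (i j : ℕ) (w : ℕ × ℕ × ℕ) : F :=
  ((i.choose w.1 : F) * A ^ w.1 * B ^ (i - w.1)) *
    ((j.choose w.2.1 : F) * C ^ w.2.1 *
      (((j - w.2.1).choose w.2.2 : F) * D ^ w.2.2 * E ^ (j - w.2.1 - w.2.2)))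

lemma cf_ne_zero_choose {F : Type*} [Field F] {A B C D E : F} {i j : ℕ} {w : ℕ × ℕ × ℕ}
    (h : cf A B C D E i j w ≠ 0) : (i.choose w.1 : F) ≠ 0 := by
  intro h0
  apply h
  unfold cf
  rw [h0]
  ring

lemma expand_binom {F : Type*} [Field F] (A B x : F) (i : ℕ) :
    (A * x + B) ^ i
      = ∑ e ∈ Finset.range (i + 1), ((i.choose e : F) * A ^ e * B ^ (i - e)) * x ^ e := by
  rw [add_pow]
  apply Finset.sum_congr rfl
  intro e _
  rw [mul_pow]
  ring

lemma expand_trinom {F : Type*} [Field F] (C D E x y : F) (j : ℕ) :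
    (C * y + D * x + E) ^ j
      = ∑ h ∈ Finset.range (j + 1), ∑ g ∈ Finset.range (j + 1),
          ((j.choose h : F) * C ^ h *
            (((j - h).choose g : F) * D ^ g * E ^ (j - h - g))) * (x ^ g * y ^ h) := by
  rw [add_assoc, add_pow]
  apply Finset.sum_congr rfl
  intro h _
  rw [expand_binom D E x (j - h), Finset.mul_sum, Finset.sum_mul]
  rw [← Finset.sum_subset (Finset.range_subset_range.mpr (show j - h + 1 ≤ j + 1 by omega))
    (by
      intro g hg1 hg
      rw [Finset.mem_range, not_lt] at hg
      have h0 : (j - h).choose g = 0 := Nat.choose_eq_zero_of_lt (by omega)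
      rw [h0]
      push_cast
      ring)]
  apply Finset.sum_congr rfl
  intro g _
  rw [mul_pow]
  ring

lemma expand_factor {F : Type*} [Field F] (A B C D E x y : F) (i j : ℕ) :
    (A * x + B) ^ i * (C * y + D * x + E) ^ j
      = ∑ w ∈ Finset.range (i + 1) ×ˢ (Finset.range (j + 1) ×ˢ Finset.range (j + 1)),
          cf A B C D E i j w * (x ^ (w.1 + w.2.2) * y ^ w.2.1) := by
  rw [expand_binom A B x i, expand_trinom C D E x y j, Finset.sum_mul]
  rw [Finset.sum_product]
  refine Finset.sum_congr rfl fun e _ => ?_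
  rw [Finset.mul_sum, Finset.sum_product]
  refine Finset.sum_congr rfl fun h _ => ?_
  rw [Finset.mul_sum]
  refine Finset.sum_congr rfl fun g _ => ?_
  unfold cf
  simp only []
  rw [pow_add]
  ring
section RED
variable {F : Type*} [Field F] [Fintype F] {m ℓ c q b s r : ℕ}
  (hq : q = 2 ^ ℓ) (hl : 0 < ℓ) (hcard : Fintype.card F = q ^ 2)
  (hm : 0 < m) (hmb : m ≤ 2 ^ (b - 2)) (hb2 : 2 ≤ b)
  (hs1 : ℓ + b ≤ s + 1) (hs2 : s + b < 2 * ℓ) (hsc : 2 * ℓ - c ≤ s)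
  (hcl : c < ℓ) (hr : r = 2 ^ (3 * ℓ) - 2 ^ (3 * ℓ - c))

include hq hl hcard hm hmb hb2 hs1 hs2 hsc hcl hr

lemma red : ∀ v t Lo P : ℕ, Lo + 2 * m ≤ m * 2 ^ s + m * q →
    P < m * 2 ^ (2 * ℓ - (s + b + 1)) → v + q * t ≤ m * (q - 1) →
    mono F q (Lo + (q + 1) * t + 2 ^ (s + b + 1) * P) v ∈ HermCode F q r := by
  have hq2 : 2 ≤ q := by
    rw [hq]
    calc 2 = 2 ^ 1 := (pow_one 2).symm
      _ ≤ 2 ^ ℓ := Nat.pow_le_pow_right (by norm_num) hl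
  intro v
  induction v using Nat.strong_induction_on with
  | _ v IH =>
    intro t Lo P hLo hP hvt
    rcases lt_or_ge v q with hvq | hvq
    · -- terminal case
      have hbl : b ≤ ℓ := by omega
      have e8 : 2 ^ (s + b + 1) = 8 * (2 ^ s * 2 ^ (b - 2)) := by
        rw [← pow_add, show (8:ℕ) = 2 ^ 3 by norm_num, ← pow_add]
        congr 1; omega
      have hq2eq : q * q = 8 * (2 ^ s * 2 ^ (b - 2)) * 2 ^ (2 * ℓ - (s + b + 1)) := by
        rw [← e8, ← pow_add, hq, ← pow_add]
        congr 1; omega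
      have hmq2 : 2 * m * q ≤ 2 ^ s := by
        calc 2 * m * q ≤ 2 * 2 ^ (b - 2) * 2 ^ ℓ := by
              rw [hq]
              exact Nat.mul_le_mul_right _ (Nat.mul_le_mul_left 2 hmb)
          _ = 2 ^ (1 + (b - 2) + ℓ) := by rw [pow_add, pow_add, pow_one]
          _ ≤ 2 ^ s := Nat.pow_le_pow_right (by norm_num) (by omega)
      have hmq'' : m ≤ q := by
        rw [hq]
        exact le_trans hmb (Nat.pow_le_pow_right (by norm_num) (by omega))
      have hG1 : 2 ^ (3 * ℓ - c) ≤ q * (2 ^ s * 2 ^ (b - 2)) := by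
        rw [hq, ← pow_add, ← pow_add]
        exact Nat.pow_le_pow_right (by norm_num) (by omega)
      have hG2 : 2 * (q * q) ≤ 2 ^ (3 * ℓ - c) := by
        rw [hq, ← pow_add, show (2:ℕ) * (2 ^ (ℓ + ℓ)) = 2 ^ (ℓ + ℓ + 1) by rw [pow_succ]; ring]
        exact Nat.pow_le_pow_right (by norm_num) (by omega)
      obtain ⟨hC1, hC2⟩ := red_arith (2 ^ s) (2 ^ (b - 2)) (2 ^ (2 * ℓ - (s + b + 1)))
        (2 ^ (3 * ℓ - c)) q m t Lo v P (Nat.two_pow_pos _) hq2 hm hmb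
        hmq'' hmq2 hq2eq hLo hP hvt hvq hG1 hG2
      set K2 := 2 ^ (2 * ℓ - (s + b + 1)) with hK2def
      have hsplit : Lo + (q + 1) * t + 2 ^ (s + b + 1) * P
          = q ^ 2 * (P / K2) + (Lo + (q + 1) * t + 8 * (2 ^ s * 2 ^ (b - 2)) * (P % K2)) := by
        calc Lo + (q + 1) * t + 2 ^ (s + b + 1) * P
            = Lo + (q + 1) * t + 2 ^ (s + b + 1) * (K2 * (P / K2) + P % K2) := by
              rw [Nat.div_add_mod]
          _ = (2 ^ (s + b + 1) * K2) * (P / K2)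
              + (Lo + (q + 1) * t + 2 ^ (s + b + 1) * (P % K2)) := by ring
          _ = _ := by rw [e8, sq, hq2eq]; try ring
      rw [hsplit, monoXred hq hl hcard]
      apply Submodule.subset_span
      refine ⟨P / K2 + (Lo + (q + 1) * t + 8 * (2 ^ s * 2 ^ (b - 2)) * (P % K2)), v, hvq, ?_, rfl⟩
      have hq3 : q * (q * q) = 2 ^ (3 * ℓ) := by
        rw [hq, ← pow_add, ← pow_add]; congr 1; ring
      rw [hr]
      have hGA : 2 ^ (3 * ℓ - c) ≤ 2 ^ (3 * ℓ) := Nat.pow_le_pow_right (by norm_num) (by omega)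
      have hC2' : q * (P / K2 + (Lo + (q + 1) * t + 8 * (2 ^ s * 2 ^ (b - 2)) * (P % K2)))
          + (q + 1) * v + 2 ^ (3 * ℓ - c) < 2 ^ (3 * ℓ) := by rw [← hq3]; exact hC2
      omega
    · -- inductive case: v ≥ q
      have h1 : v = (v - q) + q := by omega
      rw [h1, monoY hq hl hcard]
      have key1 : mono F q (Lo + (q + 1) * (t + 1) + 2 ^ (s + b + 1) * P) (v - q)
          ∈ HermCode F q r := IH (v - q) (by omega) (t + 1) Lo P hLo hP (by
            have h2 : q * (t + 1) = q * t + q := by ring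
            omega)
      have key2 : mono F q (Lo + (q + 1) * t + 2 ^ (s + b + 1) * P) (v - q + 1)
          ∈ HermCode F q r := IH (v - q + 1) (by omega) t Lo P hLo hP (by omega)
      have harr : Lo + (q + 1) * t + 2 ^ (s + b + 1) * P + (q + 1)
          = Lo + (q + 1) * (t + 1) + 2 ^ (s + b + 1) * P := by ring
      rw [harr]
      exact Submodule.add_mem _ key1 key2

end RED

/-- Good monomials lie in the lifted Hermitian code. Let `q = 2^ℓ`,
`b = 2 + ⌈log₂ m⌉`, `ℓ − c > ⌈log₂ m⌉`, and `r = (1 − 2^(−c))·q³ = 2^(3ℓ) − 2^(3ℓ−c)`.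
If the exponent tuple `(i₁,…,i_m,j₁,…,j_m)` (with `i_k < q²`, `j_k < q`) has some
`s ∈ [2ℓ−c, 2ℓ−b−1]` such that the binary digits of every `i_k` and `j_k` vanish at all
positions `s, s+1, …, s+b`, then the monomial `∏ₖ x_k^(i_k) y_k^(j_k)` belongs to
`lift_{Φ_H}^m(Herm_q[r])`. -/
theorem good_monomials_in_lift {F : Type*} [Field F] [Fintype F] [DecidableEq F]
    (m ℓ c q b r : ℕ) [NeZero m] (hl : 0 < ℓ) (hc : 0 < c)
    (hq : q = 2 ^ ℓ) (hb : b = 2 + Nat.clog 2 m)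
    (hlc : Nat.clog 2 m + c < ℓ)
    (hr : r = 2 ^ (3 * ℓ) - 2 ^ (3 * ℓ - c))
    (hcard : Fintype.card F = q ^ 2)
    (i j : Fin m → ℕ) (hi : ∀ k, i k < q ^ 2) (hj : ∀ k, j k < q)
    (hgood : ∃ s : ℕ, 2 * ℓ - c ≤ s ∧ s + b < 2 * ℓ ∧
      ∀ t ≤ b, ∀ k, Nat.testBit (i k) (s + t) = false ∧
        Nat.testBit (j k) (s + t) = false) :
    (fun p : Fin m → Hsub F q => ∏ k, (p k).1.1 ^ i k * (p k).1.2 ^ j k)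
      ∈ liftCode (PhiHsub F q) m (HermCode F q r : Set (Hsub F q → F)) := by
  obtain ⟨s, hsc, hs2, hwin⟩ := hgood
  intro σ hσ
  choose a bb cc hane hbcH hmap using hσ
  haveI hchar : CharP F 2 := char2 hq hl hcard
  have hm1 : 0 < m := Nat.pos_of_ne_zero (NeZero.ne m)
  have hmb : m ≤ 2 ^ (b - 2) := by
    rw [show b - 2 = Nat.clog 2 m by omega]
    exact Nat.le_pow_clog (by norm_num) m
  have hb2 : 2 ≤ b := by omega
  have hcl : c < ℓ := by omega
  have hs1 : ℓ + b ≤ s + 1 := by omega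
  have hpow : (0:ℕ) < 2 ^ (s + b + 1) := Nat.two_pow_pos _
  -- rewrite the restriction as a concrete product of polynomials
  have hres : restr (fun p : Fin m → Hsub F q => ∏ k, (p k).1.1 ^ i k * (p k).1.2 ^ j k) σ
      = fun z : Hsub F q => ∏ k, ((a k * z.1.1 + bb k) ^ i k *
          ((a k ^ (q + 1)) * z.1.2 + (a k * (bb k) ^ q) * z.1.1 + cc k) ^ j k) := by
    funext z
    show ∏ k, (σ k z).1.1 ^ i k * (σ k z).1.2 ^ j k = _
    apply Finset.prod_congr rfl
    intro k _
    rw [hmap k z]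
    rfl
  rw [hres]
  -- expand into a sum of monomials
  set T : Fin m → Finset (ℕ × ℕ × ℕ) := fun k =>
    Finset.range (i k + 1) ×ˢ (Finset.range (j k + 1) ×ˢ Finset.range (j k + 1)) with hT
  set Cf : (Fin m → ℕ × ℕ × ℕ) → F := fun w =>
    ∏ k, cf (a k) (bb k) (a k ^ (q + 1)) (a k * (bb k) ^ q) (cc k) (i k) (j k) (w k) with hCf
  have hsum : (fun z : Hsub F q => ∏ k, ((a k * z.1.1 + bb k) ^ i k *
          ((a k ^ (q + 1)) * z.1.2 + (a k * (bb k) ^ q) * z.1.1 + cc k) ^ j k))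
      = ∑ w ∈ Fintype.piFinset T,
          Cf w • mono F q (∑ k, ((w k).1 + (w k).2.2)) (∑ k, (w k).2.1) := by
    funext z
    rw [Finset.sum_apply]
    calc ∏ k, ((a k * z.1.1 + bb k) ^ i k *
          ((a k ^ (q + 1)) * z.1.2 + (a k * (bb k) ^ q) * z.1.1 + cc k) ^ j k)
        = ∏ k, ∑ w ∈ T k,
            cf (a k) (bb k) (a k ^ (q + 1)) (a k * (bb k) ^ q) (cc k) (i k) (j k) w
              * (z.1.1 ^ (w.1 + w.2.2) * z.1.2 ^ w.2.1) := by
          apply Finset.prod_congr rfl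
          intro k _
          exact expand_factor (a k) (bb k) (a k ^ (q + 1)) (a k * (bb k) ^ q) (cc k)
            z.1.1 z.1.2 (i k) (j k)
      _ = ∑ w ∈ Fintype.piFinset T, ∏ k,
            (cf (a k) (bb k) (a k ^ (q + 1)) (a k * (bb k) ^ q) (cc k) (i k) (j k) (w k)
              * (z.1.1 ^ ((w k).1 + (w k).2.2) * z.1.2 ^ (w k).2.1)) :=
          Finset.prod_univ_sum T _
      _ = _ := by
          apply Finset.sum_congr rfl
          intro w _
          rw [Finset.prod_mul_distrib, Finset.prod_mul_distrib,
            Finset.prod_pow_eq_pow_sum, Finset.prod_pow_eq_pow_sum]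
          rfl
  rw [hsum]
  show _ ∈ HermCode F q r
  apply Submodule.sum_mem
  intro w hw
  by_cases hC : Cf w = 0
  · rw [hC, zero_smul]
    exact Submodule.zero_mem _
  · apply Submodule.smul_mem
    have hwk : ∀ k, w k ∈ T k := Fintype.mem_piFinset.mp hw
    have hwk' : ∀ k, (w k).1 ≤ i k ∧ (w k).2.1 ≤ j k ∧ (w k).2.2 ≤ j k := by
      intro k
      have := hwk k
      rw [hT] at this
      simp only [Finset.mem_product, Finset.mem_range] at this
      omega
    have hch : ∀ k, ((i k).choose (w k).1 : F) ≠ 0 := by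
      intro k
      exact cf_ne_zero_choose (Finset.prod_ne_zero_iff.mp hC k (Finset.mem_univ k))
    have hodd : ∀ k, ((i k).choose (w k).1) % 2 = 1 := by
      intro k
      have h := hch k
      rw [Ne, CharP.cast_eq_zero_iff F 2] at h
      omega
    have hbits : ∀ k, ∀ t ≤ b, ((w k).1).testBit (s + t) = false := fun k t ht =>
      choose_odd_testBit (s + t) (i k) ((w k).1) (hodd k) ((hwin t ht k).1)
    have hlo : ∀ k, (w k).1 % 2 ^ (s + b + 1) < 2 ^ s := fun k =>
      mod_window_lt (fun t ht => hbits k t ht)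
    have hhi : ∀ k, (w k).1 / 2 ^ (s + b + 1) < 2 ^ (2 * ℓ - (s + b + 1)) := by
      intro k
      rw [Nat.div_lt_iff_lt_mul hpow]
      calc (w k).1 ≤ i k := (hwk' k).1
        _ < q ^ 2 := hi k
        _ = 2 ^ (2 * ℓ - (s + b + 1)) * 2 ^ (s + b + 1) := by
            rw [hq, ← pow_mul, ← pow_add]
            congr 1
            omega
    have hU : ∑ k, ((w k).1 + (w k).2.2)
        = (∑ k, ((w k).1 % 2 ^ (s + b + 1) + (w k).2.2)) + (q + 1) * 0
          + 2 ^ (s + b + 1) * ∑ k, (w k).1 / 2 ^ (s + b + 1) := by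
      rw [Nat.mul_zero, Nat.add_zero, Finset.mul_sum, ← Finset.sum_add_distrib]
      apply Finset.sum_congr rfl
      intro k _
      have h := Nat.div_add_mod ((w k).1) (2 ^ (s + b + 1))
      omega
    rw [hU]
    have hsac : ∀ (f : Fin m → ℕ) (cn : ℕ),
        ∑ k : Fin m, (f k + cn) = (∑ k : Fin m, f k) + m * cn := by
      intro f cn
      rw [Finset.sum_add_distrib, Finset.sum_const, Finset.card_univ, Fintype.card_fin,
        smul_eq_mul, mul_comm]
    apply red hq hl hcard hm1 hmb hb2 hs1 hs2 hsc hcl hr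
    · -- Lo bound
      have h1 : ∀ k : Fin m, ((w k).1 % 2 ^ (s + b + 1) + (w k).2.2) + 2 ≤ 2 ^ s + q := by
        intro k
        have h2 := hlo k
        have h3 := (hwk' k).2.2
        have h4 := hj k
        omega
      calc (∑ k, ((w k).1 % 2 ^ (s + b + 1) + (w k).2.2)) + 2 * m
          = ∑ k : Fin m, (((w k).1 % 2 ^ (s + b + 1) + (w k).2.2) + 2) := by
            rw [hsac]
            ring
        _ ≤ ∑ k : Fin m, (2 ^ s + q) := Finset.sum_le_sum (fun k _ => h1 k)
        _ = m * 2 ^ s + m * q := by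
            rw [Finset.sum_const, Finset.card_univ, Fintype.card_fin, smul_eq_mul]
            ring
    · -- P bound
      have h5 : (∑ k, (w k).1 / 2 ^ (s + b + 1)) + m
          ≤ m * 2 ^ (2 * ℓ - (s + b + 1)) := by
        calc (∑ k, (w k).1 / 2 ^ (s + b + 1)) + m
            = ∑ k : Fin m, ((w k).1 / 2 ^ (s + b + 1) + 1) := by
              rw [hsac]
              ring
          _ ≤ ∑ k : Fin m, 2 ^ (2 * ℓ - (s + b + 1)) :=
              Finset.sum_le_sum (fun k _ => hhi k)
          _ = m * 2 ^ (2 * ℓ - (s + b + 1)) := by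
              rw [Finset.sum_const, Finset.card_univ, Fintype.card_fin, smul_eq_mul]
      omega
    · -- V bound
      rw [Nat.mul_zero, Nat.add_zero]
      calc ∑ k, (w k).2.1 ≤ ∑ k : Fin m, (q - 1) := by
            apply Finset.sum_le_sum
            intro k _
            have h6 := (hwk' k).2.1
            have h7 := hj k
            omega
        _ = m * (q - 1) := by
            rw [Finset.sum_const, Finset.card_univ, Fintype.card_fin, smul_eq_mul]
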